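/- Let H be a complex Hilbert space, let N be a self-adjoint norm on B(H) (i.e., N(A*) = N(A) for all A), and let 0 ≤ ν ≤ 1. Then for every A ∈ B(H), ((1 + |1 - 2ν|)/2) N(A) ≤ w_{(N,ν)}(A) ≤ N(A). -/
import Mathlib


variable {H : Type*} [NormedAddCommGroup H] [InnerProductSpace ℂ H] [CompleteSpace H]

/-- The operator `ν e^{iθ} A + (1-ν) e^{-iθ} A*`. -/
noncomputable def weightedPart (ν θ : ℝ) (A : H →L[ℂ] H) : H →L[ℂ] H :=
  ((ν : ℂ) * Complex.exp (θ * Complex.I)) • A +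
    (((1 - ν : ℝ) : ℂ) * Complex.exp (-(θ * Complex.I))) • ContinuousLinearMap.adjoint A

/-- The weighted `N`-numerical radius `w_{(N,ν)}(A) = sup_{θ ∈ ℝ} N(ν e^{iθ} A + (1-ν) e^{-iθ} A*)`. -/
noncomputable def wN (N : (H →L[ℂ] H) → ℝ) (ν : ℝ) (A : H →L[ℂ] H) : ℝ :=
  ⨆ θ : ℝ, N (weightedPart ν θ A)

theorem stmt5 (N : (H →L[ℂ] H) → ℝ)
    (hN_nonneg : ∀ A, 0 ≤ N A)
    (hN_eq_zero : ∀ A, N A = 0 ↔ A = 0)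
    (hN_smul : ∀ (α : ℂ) (A), N (α • A) = ‖α‖ * N A)
    (hN_add : ∀ A B, N (A + B) ≤ N A + N B)
    (hN_sa : ∀ A, N (ContinuousLinearMap.adjoint A) = N A)
    (ν : ℝ) (hν₀ : 0 ≤ ν) (hν₁ : ν ≤ 1) (A : H →L[ℂ] H) :
    (1 + |1 - 2 * ν|) / 2 * N A ≤ wN N ν A ∧ wN N ν A ≤ N A := by
  have hexp : ∀ θ : ℝ, ‖Complex.exp ((θ : ℂ) * Complex.I)‖ = 1 := fun θ =>
    Complex.norm_exp_ofReal_mul_I θ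
  have hexp' : ∀ θ : ℝ, ‖Complex.exp (-((θ : ℂ) * Complex.I))‖ = 1 := fun θ => by
    rw [show -((θ : ℂ) * Complex.I) = ((-θ : ℝ) : ℂ) * Complex.I by push_cast; ring]
    exact Complex.norm_exp_ofReal_mul_I (-θ)
  have hbound : ∀ θ : ℝ, N (weightedPart ν θ A) ≤ N A := by
    intro θ
    unfold weightedPart
    calc N _ ≤ N (((ν : ℂ) * Complex.exp ((θ : ℂ) * Complex.I)) • A) +
        N ((((1 - ν : ℝ) : ℂ) * Complex.exp (-((θ : ℂ) * Complex.I))) •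
          ContinuousLinearMap.adjoint A) := hN_add _ _
      _ = ν * N A + (1 - ν) * N A := by
          rw [hN_smul, hN_smul, hN_sa, norm_mul, norm_mul, hexp, hexp',
            Complex.norm_real, Complex.norm_real, Real.norm_eq_abs, Real.norm_eq_abs,
            abs_of_nonneg hν₀, abs_of_nonneg (by linarith : (0:ℝ) ≤ 1 - ν)]
          ring
      _ = N A := by ring
  have hbdd : BddAbove (Set.range fun θ : ℝ => N (weightedPart ν θ A)) :=
    ⟨N A, by rintro x ⟨θ, rfl⟩; exact hbound θ⟩
  have hupper : wN N ν A ≤ N A := ciSup_le hbound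
  -- key identities
  have h1 : Complex.exp (((Real.pi / 2 : ℝ) : ℂ) * Complex.I) = Complex.I := by
    rw [Complex.exp_mul_I, ← Complex.ofReal_cos, ← Complex.ofReal_sin,
      Real.cos_pi_div_two, Real.sin_pi_div_two]
    simp
  have h2 : Complex.exp (-(((Real.pi / 2 : ℝ) : ℂ) * Complex.I)) = -Complex.I := by
    rw [Complex.exp_neg, h1, Complex.inv_I]
  have hB0 : weightedPart ν 0 A - Complex.I • weightedPart ν (Real.pi / 2) A =
      ((2 * ν : ℝ) : ℂ) • A := by
    unfold weightedPart
    rw [h1, h2]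
    push_cast
    simp only [Complex.ofReal_zero, zero_mul, neg_zero, Complex.exp_zero]
    match_scalars <;> (ring_nf; simp [Complex.I_sq]; try ring)
  have hB1 : weightedPart ν 0 A + Complex.I • weightedPart ν (Real.pi / 2) A =
      ((2 * (1 - ν) : ℝ) : ℂ) • ContinuousLinearMap.adjoint A := by
    unfold weightedPart
    rw [h1, h2]
    push_cast
    simp only [Complex.ofReal_zero, zero_mul, neg_zero, Complex.exp_zero]
    match_scalars <;> (ring_nf; simp [Complex.I_sq]; try ring)
  have hle0 : N (weightedPart ν 0 A) ≤ wN N ν A := le_ciSup hbdd 0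
  have hle1 : N (weightedPart ν (Real.pi / 2) A) ≤ wN N ν A := le_ciSup hbdd (Real.pi / 2)
  have hIs : N (Complex.I • weightedPart ν (Real.pi / 2) A) =
      N (weightedPart ν (Real.pi / 2) A) := by
    rw [hN_smul]; simp
  have hν' : 2 * ν * N A ≤ 2 * wN N ν A := by
    have := hN_add (weightedPart ν 0 A) (-(Complex.I • weightedPart ν (Real.pi / 2) A))
    rw [← sub_eq_add_neg, hB0] at this
    have hneg : N (-(Complex.I • weightedPart ν (Real.pi / 2) A)) =
        N (weightedPart ν (Real.pi / 2) A) := by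
      rw [show -(Complex.I • weightedPart ν (Real.pi / 2) A) =
        ((-1 : ℂ)) • (Complex.I • weightedPart ν (Real.pi / 2) A) by simp, hN_smul]
      simp [hIs]
    rw [hneg] at this
    have h2ν : N (((2 * ν : ℝ) : ℂ) • A) = (2 * ν) * N A := by
      rw [hN_smul, Complex.norm_real, Real.norm_eq_abs, abs_of_nonneg (by linarith)]
    linarith [this, h2ν ▸ this, hle0, hle1]
  have hν'' : 2 * (1 - ν) * N A ≤ 2 * wN N ν A := by
    have := hN_add (weightedPart ν 0 A) (Complex.I • weightedPart ν (Real.pi / 2) A)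
    rw [hB1] at this
    have h2ν : N (((2 * (1 - ν) : ℝ) : ℂ) • ContinuousLinearMap.adjoint A) =
        (2 * (1 - ν)) * N A := by
      rw [hN_smul, hN_sa, Complex.norm_real, Real.norm_eq_abs,
        abs_of_nonneg (by linarith)]
    rw [h2ν, hIs] at this
    linarith [hle0, hle1]
  refine ⟨?_, hupper⟩
  rcases le_or_gt ν (1 / 2) with h | h
  · rw [abs_of_nonneg (by linarith)]
    nlinarith [hν'']
  · rw [abs_of_neg (by linarith)]
    nlinarith [hν']
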